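/- arXiv:2205.01653 — 3 statements merged into one kernel-verified Lean document; each statement's English description precedes it below -/
import Mathlib

section
/- Let R = ℤ[A,A⁻¹] be the ring of Laurent polynomials over ℤ, let Q = R[t]/S where S is the R-submodule of the polynomial ring R[t] generated by the elements r_n for n ≥ 2 (defined in the context), and let M = R ⊕ R ⊕ Q as an R-module. Then M does not decompose as a direct sum of a free R-module and a torsion R-module; that is, there is no R-module isomorphism M ≅ F ⊕ T with F a free R-module and T an R-module all of whose elements are annihilated by some nonzero element of R. -/
/-!
Counterexample to Marché's conjecture: the Kauffman bracket skein module of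
ℝP³ # ℝP³ over R = ℤ[A,A⁻¹], namely M = R ⊕ R ⊕ (R[t]/S), does not decompose
as a direct sum of a free R-module and a torsion R-module.
-/

open LaurentPolynomial Polynomial

noncomputable section

/-- The ring of Laurent polynomials `ℤ[A, A⁻¹]`; here `A = T 1`. -/
abbrev R : Type := LaurentPolynomial ℤ

/-- Chebyshev polynomials of the second kind: `S₀ = 1`, `S₁ = t`,
`S_{n+1} = t·S_n − S_{n−1}`, viewed in `R[t]`. -/
def cheb : ℕ → Polynomial R
  | 0 => 1
  | 1 => X
  | n + 2 => X * cheb (n + 1) - cheb n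

/-- The relation `r_n ∈ R[t]` for `n ≥ 2`:
for even `n`, `(A^{n+1} + A^{−(n+1)})(S_n(t) − 1) − 2(A + A^{−1})·∑_{k=1}^{n/2} A^{n+2−4k}`;
for odd `n`, `(A^{n+1} + A^{−(n+1)})(S_n(t) − t) − 2t·∑_{k=1}^{(n−1)/2} A^{n+1−4k}`. -/
def rel (n : ℕ) : Polynomial R :=
  if Even n then
    Polynomial.C (T ((n : ℤ) + 1) + T (-((n : ℤ) + 1))) * (cheb n - 1)
      - Polynomial.C ((2 : R) * (T 1 + T (-1)) *
          ∑ k ∈ Finset.range (n / 2), T ((n : ℤ) + 2 - 4 * ((k : ℤ) + 1)))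
  else
    Polynomial.C (T ((n : ℤ) + 1) + T (-((n : ℤ) + 1))) * (cheb n - X)
      - (2 : Polynomial R) * X *
          Polynomial.C (∑ k ∈ Finset.range ((n - 1) / 2), T ((n : ℤ) + 1 - 4 * ((k : ℤ) + 1)))

/-- The submodule `S ⊆ R[t]` generated by the `r_n`, `n ≥ 2`. -/
def SRel : Submodule R (Polynomial R) :=
  Submodule.span R {p : Polynomial R | ∃ n : ℕ, 2 ≤ n ∧ p = rel n}

/-- The quotient module `Q = R[t]/S`. -/
abbrev Qmod : Type := Polynomial R ⧸ SRel

/-! ### Auxiliary lemmas -/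

instance : IsDomain R := NoZeroDivisors.to_isDomain _

/-- Evaluation of Laurent polynomials at a unit of a commutative ring. -/
def evalT {K : Type} [CommRing K] (α : Kˣ) : R →+* K :=
  (AddMonoidAlgebra.lift ℤ K ℤ ((Units.coeHom K).comp (zpowersHom Kˣ α))).toRingHom

theorem evalT_T {K : Type} [CommRing K] (α : Kˣ) (n : ℤ) : evalT α (T n) = ((α ^ n : Kˣ) : K) := by
  have : (T n : R) = AddMonoidAlgebra.single n 1 := rfl
  rw [evalT, this]
  simp only [AlgHom.toRingHom_eq_coe, RingHom.coe_coe, AddMonoidAlgebra.lift_single,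
    MonoidHom.coe_comp, Function.comp_apply, Units.coeHom_apply, one_smul, zpowersHom_apply]
  rfl

theorem cheb_coeff : ∀ n : ℕ, (cheb n).coeff n = 1 ∧ ∀ k, n < k → (cheb n).coeff k = 0
  | 0 => by
    constructor
    · simp [cheb]
    · intro k hk; rw [cheb]; simp [Polynomial.coeff_one]; omega
  | 1 => by
    constructor
    · simp [cheb]
    · intro k hk; rw [cheb]; simp [Polynomial.coeff_X]; omega
  | n + 2 => by
    obtain ⟨h1, h1'⟩ := cheb_coeff (n + 1)
    obtain ⟨h0, h0'⟩ := cheb_coeff n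
    constructor
    · rw [cheb, Polynomial.coeff_sub, Polynomial.coeff_X_mul, h1, h0' _ (by omega)]
      ring
    · intro k hk
      obtain ⟨j, rfl⟩ : ∃ j, k = j + 1 := ⟨k - 1, by omega⟩
      rw [cheb, Polynomial.coeff_sub, Polynomial.coeff_X_mul, h1' _ (by omega),
        h0' _ (by omega)]
      ring

/-- The leading coefficient `A^{n+1} + A^{-(n+1)}` of the relation `r_n`. -/
def cc (n : ℕ) : R := T ((n : ℤ) + 1) + T (-((n : ℤ) + 1))

theorem cc_ne_zero (n : ℕ) : cc n ≠ 0 := by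
  intro h
  have := congrArg (evalT (1 : ℚˣ)) h
  rw [cc, map_add, evalT_T, evalT_T, map_zero, one_zpow, one_zpow] at this
  norm_num at this

theorem rel_coeff {n : ℕ} (hn : 2 ≤ n) :
    (rel n).coeff n = cc n ∧ ∀ k, n < k → (rel n).coeff k = 0 := by
  have hc := cheb_coeff n
  have key : ∀ k, 2 ≤ k → (rel n).coeff k = cc n * ((cheb n).coeff k) := by
    intro k hk
    by_cases h : Even n
    · simp only [rel, if_pos h, Polynomial.coeff_sub, Polynomial.coeff_C_mul,
        Polynomial.coeff_C, Polynomial.coeff_one, cc]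
      rw [if_neg (by omega : ¬ k = 0), if_neg (by omega : ¬ k = 0)]
      ring
    · simp only [rel, if_neg h, Polynomial.coeff_sub, Polynomial.coeff_C_mul, cc]
      have h2 : ((2 : Polynomial R) * X *
          Polynomial.C (∑ k ∈ Finset.range ((n - 1) / 2), T ((n : ℤ) + 1 - 4 * ((k : ℤ) + 1)))).coeff k
          = 0 := by
        set d : R := ∑ k ∈ Finset.range ((n - 1) / 2), T ((n : ℤ) + 1 - 4 * ((k : ℤ) + 1)) with hd
        have h2C : (Polynomial.C (2 * d)) = (2 : Polynomial R) * Polynomial.C d := by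
          rw [map_mul, map_ofNat]
        rw [show (2 : Polynomial R) * X * Polynomial.C d = Polynomial.C (2 * d) * X by
          rw [h2C]; ring]
        rw [Polynomial.coeff_C_mul, Polynomial.coeff_X, if_neg (by omega : ¬ 1 = k), mul_zero]
      rw [h2, Polynomial.coeff_X, if_neg (by omega : ¬ 1 = k)]
      ring
  constructor
  · rw [key n (by omega), hc.1, mul_one]
  · intro k hkn
    rw [key k (by omega), hc.2 k hkn, mul_zero]

theorem rel_natDegree {n : ℕ} (hn : 2 ≤ n) : (rel n).natDegree = n := by
  obtain ⟨h1, h2⟩ := rel_coeff hn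
  refine le_antisymm (Polynomial.natDegree_le_iff_coeff_eq_zero.2 h2)
    (Polynomial.le_natDegree_of_ne_zero ?_)
  rw [h1]
  exact cc_ne_zero n

theorem eq_zero_of_C_mem_SRel {r : R} (h : Polynomial.C r ∈ SRel) : r = 0 := by
  rw [SRel, Submodule.mem_span_set] at h
  obtain ⟨c, hsupp, hsum⟩ := h
  by_contra hr
  have hcne : c.support.Nonempty := by
    rcases Finset.eq_empty_or_nonempty c.support with he | hne
    · rw [Finsupp.support_eq_empty.1 he] at hsum
      simp only [Finsupp.sum_zero_index] at hsum
      exact (hr (by simpa using (Polynomial.C_inj.1 (hsum.symm.trans Polynomial.C_0.symm)))).elim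
    · exact hne
  obtain ⟨p₀, hp₀mem, hp₀⟩ := Finset.exists_mem_eq_sup c.support hcne fun p => p.natDegree
  obtain ⟨n₀, hn₀2, rfl⟩ := hsupp hp₀mem
  set N := c.support.sup fun p => p.natDegree with hN
  have hNn : N = n₀ := by rw [hp₀, rel_natDegree hn₀2]
  have hcoeff : (Polynomial.C r).coeff N = ∑ p ∈ c.support, c p * p.coeff N := by
    rw [← hsum, Finsupp.sum, Polynomial.finset_sum_coeff]
    refine Finset.sum_congr rfl fun p _ => ?_
    rw [Polynomial.coeff_smul, smul_eq_mul]
  rw [Finset.sum_eq_single (rel n₀)] at hcoeff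
  · rw [hNn, (rel_coeff hn₀2).1] at hcoeff
    rw [Polynomial.coeff_C, if_neg (by omega : ¬ n₀ = 0)] at hcoeff
    exact (mul_ne_zero (Finsupp.mem_support_iff.1 hp₀mem) (cc_ne_zero n₀)) hcoeff.symm
  · intro b hb hbne
    obtain ⟨m, hm2, rfl⟩ := hsupp hb
    have hle : (rel m).natDegree ≤ N := Finset.le_sup hb
    rw [rel_natDegree hm2] at hle
    rcases lt_or_eq_of_le hle with hlt | heq
    · rw [(rel_coeff hm2).2 N (by omega), mul_zero]
    · exact absurd (by rw [heq, hNn]) hbne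
  · intro hnot
    exact absurd hp₀mem hnot

theorem key_arith (u : R) (hu : u ≠ 0) :
    ¬ ∀ n : ℕ, 2 ≤ n → Even n →
      (cc n ∣ ((2 : R) * (T 1 + T (-1)) *
        ∑ k ∈ Finset.range (n / 2), T ((n : ℤ) + 2 - 4 * ((k : ℤ) + 1))) * u) := by
  intro H
  obtain ⟨w, P, hP⟩ := LaurentPolynomial.exists_T_pow u
  have hPne : P ≠ 0 := by
    intro h0
    rw [h0, map_zero] at hP
    exact hu (((isUnit_T (w:ℤ)).mul_left_eq_zero).1 hP.symm)
  obtain ⟨p, hple, hp⟩ := Nat.exists_infinite_primes (P.natDegree + 3)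
  have hpodd : Odd p := hp.odd_of_ne_two (by omega)
  set n := p - 1 with hn
  have hn2 : 2 ≤ n := by omega
  have hneven : Even n := Nat.Odd.sub_odd hpodd odd_one
  have hirr : Irreducible (Polynomial.cyclotomic (4 * p) ℚ) :=
    Polynomial.cyclotomic.irreducible_rat (by omega)
  haveI : Fact (Irreducible (Polynomial.cyclotomic (4 * p) ℚ)) := ⟨hirr⟩
  set K := AdjoinRoot (Polynomial.cyclotomic (4 * p) ℚ) with hK
  set α : K := AdjoinRoot.root _ with hα
  haveI : CharZero K := charZero_of_injective_algebraMap (algebraMap ℚ K).injective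
  haveI : NeZero ((4 * p : ℕ) : K) := ⟨Nat.cast_ne_zero.2 (by omega)⟩
  have hroot : (Polynomial.cyclotomic (4*p) K).IsRoot α := by
    have := AdjoinRoot.isRoot_root (Polynomial.cyclotomic (4 * p) ℚ)
    rwa [Polynomial.map_cyclotomic] at this
  have hprim : IsPrimitiveRoot α (4*p) := (Polynomial.isRoot_cyclotomic_iff).1 hroot
  have hαne : α ≠ 0 := hprim.ne_zero (by omega)
  set αu : Kˣ := Units.mk0 α hαne with hαu
  have hval : ∀ k : ℤ, ((αu ^ k : Kˣ) : K) = α ^ k := fun k => by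
    rw [Units.val_zpow_eq_zpow_val, Units.val_mk0]
  have hvalT : ∀ k : ℤ, evalT αu (T k) = α ^ k := fun k => by rw [evalT_T, hval]
  -- basic root facts
  have h2p : α ^ (2*p) = -1 := by
    have hsq : α ^ (2*p) * α ^ (2*p) = 1 := by
      rw [← pow_add, (by ring : 2*p+2*p = 4*p), hprim.pow_eq_one]
    rcases mul_self_eq_one_iff.1 hsq with h1 | h1
    · exfalso
      have := Nat.le_of_dvd (by omega) ((hprim.pow_eq_one_iff_dvd (2*p)).1 h1)
      omega
    · exact h1
  have h4ne : α ^ (4:ℕ) ≠ 1 := by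
    intro h
    have := Nat.le_of_dvd (by norm_num) ((hprim.pow_eq_one_iff_dvd 4).1 h)
    omega
  have hsqne : α ^ (2:ℕ) ≠ -1 := by
    intro h
    apply h4ne
    have e : α ^ (4:ℕ) = (α ^ (2:ℕ)) ^ 2 := by ring
    rw [e, h]; ring
  -- evalT cc = 0
  have hcastn : ((n:ℤ) + 1) = (p:ℤ) := by
    rw [hn]; push_cast [Nat.cast_sub (by omega : 1 ≤ p)]; ring
  have hccz : evalT αu (cc n) = 0 := by
    have hmul : evalT αu (cc n) * α ^ ((p:ℤ)) = 0 := by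
      rw [cc, map_add, hvalT, hvalT, hcastn, add_mul, ← zpow_add₀ hαne, ← zpow_add₀ hαne,
        neg_add_cancel, zpow_zero, (by push_cast; ring : (p:ℤ) + (p:ℤ) = ((2*p:ℕ):ℤ)),
        zpow_natCast, h2p]
      ring
    rcases mul_eq_zero.1 hmul with h | h
    · exact h
    · exact absurd h (zpow_ne_zero _ hαne)
  -- evalT u ≠ 0
  have huz : evalT αu u ≠ 0 := by
    set ε : Polynomial ℤ →+* K :=
      (AdjoinRoot.mk (Polynomial.cyclotomic (4 * p) ℚ)).comp
        (Polynomial.mapRingHom (Int.castRingHom ℚ)) with hε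
    have hcomm : (evalT αu).comp Polynomial.toLaurent = ε := by
      apply Polynomial.ringHom_ext'
      · exact Subsingleton.elim _ _
      · rw [RingHom.comp_apply, Polynomial.toLaurent_X, hvalT, zpow_one, hε,
          RingHom.comp_apply, Polynomial.coe_mapRingHom, Polynomial.map_X, AdjoinRoot.mk_X]
    have hPK : ε P ≠ 0 := by
      intro h0
      rw [hε, RingHom.comp_apply, AdjoinRoot.mk_eq_zero] at h0
      have hmapne : Polynomial.map (Int.castRingHom ℚ) P ≠ 0 := by
        intro hz
        exact hPne (Polynomial.map_injective _ Int.cast_injective (by simpa using hz))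
      simp only [Polynomial.coe_mapRingHom] at h0
      have hdeg := Polynomial.natDegree_le_of_dvd h0 hmapne
      rw [Polynomial.natDegree_cyclotomic,
        Polynomial.natDegree_map_eq_of_injective Int.cast_injective P] at hdeg
      rw [Nat.totient_mul (by
          rw [Nat.coprime_comm]
          exact (hp.coprime_iff_not_dvd).2 (fun hdvd => by
            have h2 := hp.dvd_of_dvd_pow (n := 2) (by
              rw [(by norm_num : (2:ℕ)^2 = 4)]; exact hdvd)
            have := Nat.le_of_dvd (by norm_num) h2
            omega)),
        Nat.totient_prime hp] at hdeg
      have h4 : Nat.totient 4 = 2 := by decide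
      rw [h4] at hdeg
      omega
    intro h0
    apply hPK
    rw [← hcomm, RingHom.comp_apply, hP, map_mul, h0, zero_mul]
  -- evalT of the D part is nonzero
  have hα2 : (α:K)⁻¹ = α ^ (-1:ℤ) := by rw [zpow_neg, zpow_one]
  have hDz : evalT αu ((2 : R) * (T 1 + T (-1)) *
        ∑ k ∈ Finset.range (n / 2), T ((n : ℤ) + 2 - 4 * ((k : ℤ) + 1))) ≠ 0 := by
    rw [map_mul, map_mul, map_add, hvalT, hvalT, map_sum]
    refine mul_ne_zero (mul_ne_zero ?_ ?_) ?_
    · rw [map_ofNat]; exact two_ne_zero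
    · intro h
      have hcalc : (α ^ (1:ℤ) + α ^ (-1:ℤ)) * α = α ^ (2:ℕ) + 1 := by
        rw [zpow_one, zpow_neg, zpow_one, add_mul, inv_mul_cancel₀ hαne, pow_two]
      rw [h, zero_mul] at hcalc
      exact hsqne (by linear_combination -hcalc)
    · -- the geometric sum
      have hterm : ∀ k ∈ Finset.range (n / 2), evalT αu (T ((n : ℤ) + 2 - 4 * ((k : ℤ) + 1)))
          = α ^ ((p:ℤ) - 3) * (α ^ (-4:ℤ)) ^ k := by
        intro k _
        rw [hvalT, (by rw [← hcastn]; push_cast; ring : (n:ℤ) + 2 - 4*((k:ℤ)+1) = ((p:ℤ) - 3) + (-4) * (k:ℤ)),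
          zpow_add₀ hαne, zpow_mul, zpow_natCast]
      rw [Finset.sum_congr rfl hterm, ← Finset.mul_sum]
      refine mul_ne_zero (zpow_ne_zero _ hαne) ?_
      have hx1 : α ^ (-4:ℤ) ≠ 1 := by
        intro h
        apply h4ne
        have h' : α ^ (4:ℤ) = 1 := by
          rw [← neg_neg (4:ℤ), zpow_neg, h, inv_one]
        rw [(by rw [← zpow_natCast α 4]; norm_num : α ^ (4:ℕ) = α ^ (4:ℤ))]
        exact h'
      rw [geom_sum_eq hx1]
      refine div_ne_zero ?_ (sub_ne_zero.2 hx1)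
      have hm : (4:ℤ) * ((n/2 : ℕ):ℤ) = 2*(p:ℤ) - 2 := by
        obtain ⟨j, hj⟩ := hpodd
        omega
      have hpow : (α ^ (-4:ℤ)) ^ (n/2) = - α ^ (2:ℕ) := by
        have e1 : (α ^ (-4:ℤ)) ^ (n/2) = α ^ ((-4:ℤ) * ((n/2:ℕ):ℤ)) := by
          rw [zpow_mul, zpow_natCast]
        rw [e1, (by linear_combination -hm : (-4:ℤ) * ((n/2 : ℕ):ℤ) = 2 - 2*(p:ℤ)),
          zpow_sub₀ hαne, (by push_cast; ring : (2*(p:ℤ)) = ((2*p:ℕ):ℤ)), zpow_natCast, h2p,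
          (by rw [← zpow_natCast α 2]; norm_num : α ^ (2:ℤ) = α ^ (2:ℕ))]
        rw [div_neg, div_one]
      rw [hpow]
      intro h
      exact hsqne (by linear_combination -h)
  -- contradiction
  obtain ⟨q, hq⟩ := H n hn2 hneven
  have hcontr : evalT αu ((2 * (T 1 + T (-1)) * ∑ k ∈ Finset.range (n / 2), T ((n:ℤ) + 2 - 4 * ((k:ℤ) + 1))) * u) = 0 := by
    rw [hq, map_mul, hccz, zero_mul]
  rw [map_mul] at hcontr
  exact (mul_ne_zero hDz huz) hcontr

/-- `M = R ⊕ R ⊕ Q` (the KBSM of `ℝP³ # ℝP³`) admits no decomposition `M ≅ F ⊕ T`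
with `F` free and `T` torsion over `R = ℤ[A,A⁻¹]`. -/

theorem no_free_torsion_decomposition :
    ¬ ∃ (F Tor : Type) (_ : AddCommGroup F) (_ : Module R F)
        (_ : AddCommGroup Tor) (_ : Module R Tor),
      Module.Free R F ∧
      (∀ x : Tor, ∃ r : R, r ≠ 0 ∧ r • x = 0) ∧
      Nonempty ((R × R × Qmod) ≃ₗ[R] F × Tor) := by
  rintro ⟨F, Tor, _, _, _, _, hfree, htor, ⟨e⟩⟩
  haveI := hfree
  set m₁ : R × R × Qmod := (0, 0, Submodule.Quotient.mk 1) with hm₁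
  -- the relations in the quotient
  have hrelq : ∀ n : ℕ, 2 ≤ n → Even n →
      cc n • ((0, 0, Submodule.Quotient.mk (cheb n - 1)) : R × R × Qmod)
        = ((2 : R) * (T 1 + T (-1)) *
            ∑ k ∈ Finset.range (n / 2), T ((n : ℤ) + 2 - 4 * ((k : ℤ) + 1))) • m₁ := by
    intro n hn2 hev
    refine Prod.ext (by simp [hm₁]) (Prod.ext (by simp [hm₁]) ?_)
    show cc n • (Submodule.Quotient.mk (cheb n - 1) : Qmod) = _ • (Submodule.Quotient.mk 1 : Qmod)
    rw [← Submodule.Quotient.mk_smul, ← Submodule.Quotient.mk_smul, Submodule.Quotient.eq]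
    have : cc n • (cheb n - 1) - ((2 : R) * (T 1 + T (-1)) *
            ∑ k ∈ Finset.range (n / 2), T ((n : ℤ) + 2 - 4 * ((k : ℤ) + 1))) • (1 : Polynomial R)
        = rel n := by
      rw [Polynomial.smul_eq_C_mul, Polynomial.smul_eq_C_mul, mul_one, rel, if_pos hev, cc]
    rw [this]
    exact Submodule.subset_span ⟨n, hn2, rfl⟩
  by_cases hf : (e m₁).1 = 0
  · -- then m₁ would be torsion, contradicting that no nonzero constant lies in SRel
    obtain ⟨r, hr0, hr⟩ := htor (e m₁).2
    have hz : e (r • m₁) = 0 := by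
      rw [map_smul]
      refine Prod.ext ?_ ?_
      · rw [Prod.smul_fst, hf, smul_zero]; rfl
      · rw [Prod.smul_snd, hr]; rfl
    have hm0 : r • m₁ = 0 := by
      rwa [LinearEquiv.map_eq_zero_iff] at hz
    have h3 : r • (Submodule.Quotient.mk (1 : Polynomial R) : Qmod) = 0 :=
      congrArg (fun z : R × R × Qmod => z.2.2) hm0
    rw [← Submodule.Quotient.mk_smul, Submodule.Quotient.mk_eq_zero,
      Polynomial.smul_eq_C_mul, mul_one] at h3
    exact hr0 (eq_zero_of_C_mem_SRel h3)
  · -- the free part coordinate gives impossible divisibilities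
    set b := Module.Free.chooseBasis R F with hb
    have hrf : b.repr (e m₁).1 ≠ 0 := by
      rw [ne_eq, map_eq_zero_iff _ b.repr.injective]
      exact hf
    obtain ⟨i, hi⟩ := Finsupp.ne_iff.1 hrf
    refine key_arith (b.repr (e m₁).1 i) hi (fun n hn2 hev => ?_)
    have h1 := congrArg e (hrelq n hn2 hev)
    rw [map_smul, map_smul] at h1
    have h2 := congrArg Prod.fst h1
    rw [Prod.smul_fst, Prod.smul_fst] at h2
    have h3 := congrArg (fun z => b.repr z i) h2
    simp only [map_smul, Finsupp.smul_apply, smul_eq_mul] at h3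
    exact ⟨_, h3.symm⟩

end
end

section
/- Let R = ℤ[A,A⁻¹] be the ring of Laurent polynomials over ℤ, let Q = R[t]/S where S is the R-submodule of R[t] generated by the elements r_n for n ≥ 2 (defined in the context), and let M = R ⊕ R ⊕ Q as an R-module. Then there do not exist an integer d ≥ 0 and finitely generated R-modules N_k for k ≥ 1, where every element of N_k is annihilated by some power of (A^k − A^{−k}), such that M is isomorphic as an R-module to R^d ⊕ ⊕_{k≥1} N_k. (In particular, Marché's conjectured decomposition of the Kauffman bracket skein module fails for M = ℝP³ # ℝP³.) -/
/-!
Counterexample to Marché's conjecture: the Kauffman bracket skein module of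
ℝP³ # ℝP³ over R = ℤ[A,A⁻¹], namely M = R ⊕ R ⊕ (R[t]/S), admits no
decomposition M ≅ R^d ⊕ ⊕_{k≥1} N_k with each N_k finitely generated and
every element of N_k killed by some power of (A^k − A^{−k}).
-/

open LaurentPolynomial Polynomial

noncomputable section

namespace MarcheAux

instance : IsDomain R := NoZeroDivisors.to_isDomain _

/-- Fraction field of `R`. -/
abbrev K : Type := FractionRing R

/-- Nonzeroness of sums/differences of distinct monomials in `R`. -/
lemma T_add_T_ne_zero {a b : ℤ} (h : a ≠ b) : (T a + T b : R) ≠ 0 := by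
  intro hh
  have : ((T a + T b : R) : AddMonoidAlgebra ℤ ℤ).coeff a = 0 := by rw [hh]; rfl
  change (AddMonoidAlgebra.single a (1:ℤ) + AddMonoidAlgebra.single b 1).coeff a = 0 at this
  simp [Finsupp.single_apply, h, Ne.symm h] at this

lemma T_sub_T_ne_zero {a b : ℤ} (h : a ≠ b) : (T a - T b : R) ≠ 0 := by
  intro hh
  have : ((T a - T b : R) : AddMonoidAlgebra ℤ ℤ).coeff a = 0 := by rw [hh]; rfl
  change (AddMonoidAlgebra.single a (1:ℤ) - AddMonoidAlgebra.single b 1).coeff a = 0 at this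
  simp [Finsupp.single_apply, h, Ne.symm h] at this

/-- The leading factor `a_m = A^{m+1} + A^{-(m+1)}`. -/
def afac (m : ℕ) : R := T ((m : ℤ) + 1) + T (-((m : ℤ) + 1))

/-- The constant `κ_m = 2(A+A⁻¹)·∑ A^{m+2-4(k+1)}`. -/
def kap (m : ℕ) : R :=
  (2 : R) * (T 1 + T (-1)) * ∑ k ∈ Finset.range (m / 2), T ((m : ℤ) + 2 - 4 * ((k : ℤ) + 1))

/-- The constant `τ_m`. -/
def tauf (m : ℕ) : R := ∑ k ∈ Finset.range ((m - 1) / 2), T ((m : ℤ) + 1 - 4 * ((k : ℤ) + 1))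

lemma afac_ne_zero (m : ℕ) : afac m ≠ 0 := T_add_T_ne_zero (by omega)

lemma aM_afac_ne_zero (m : ℕ) : algebraMap R K (afac m) ≠ 0 := by
  rw [Ne, map_eq_zero_iff _ (IsFractionRing.injective R K)]
  exact afac_ne_zero m

lemma rel_even {m : ℕ} (hm : Even m) :
    rel m = Polynomial.C (afac m) * (cheb m - 1) - Polynomial.C (kap m) := by
  rw [rel, if_pos hm]; rfl

lemma rel_odd {m : ℕ} (hm : ¬ Even m) :
    rel m = Polynomial.C (afac m) * (cheb m - Polynomial.X)
      - (2 : Polynomial R) * Polynomial.X * Polynomial.C (tauf m) := by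
  rw [rel, if_neg hm]; rfl

/-- `cheb m` is monic of degree `m`. -/
lemma cheb_monic_natDegree (m : ℕ) : (cheb m).Monic ∧ (cheb m).natDegree = m := by
  induction m using Nat.strong_induction_on with
  | _ m ih =>
    match m with
    | 0 => exact ⟨monic_one, by simp [cheb]⟩
    | 1 => exact ⟨monic_X, by simp [cheb]⟩
    | (k+2) =>
      obtain ⟨h1m, h1d⟩ := ih (k+1) (by omega)
      obtain ⟨h0m, h0d⟩ := ih k (by omega)
      have hxm : (Polynomial.X * cheb (k+1)).Monic := monic_X.mul h1m
      have hxd : (Polynomial.X * cheb (k+1)).natDegree = k + 2 := by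
        rw [monic_X.natDegree_mul h1m, h1d, Polynomial.natDegree_X]
        omega
      have hlt : (cheb k).degree < (Polynomial.X * cheb (k+1)).degree := by
        rw [Polynomial.degree_eq_natDegree h0m.ne_zero,
          Polynomial.degree_eq_natDegree hxm.ne_zero, hxd, h0d]
        exact_mod_cast by omega
      constructor
      · show (Polynomial.X * cheb (k+1) - cheb k).Monic
        exact hxm.sub_of_left hlt
      · show (Polynomial.X * cheb (k+1) - cheb k).natDegree = k + 2
        rw [Polynomial.natDegree_eq_of_degree_eq_some]
        rw [Polynomial.degree_sub_eq_left_of_degree_lt hlt,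
          Polynomial.degree_eq_natDegree hxm.ne_zero, hxd]

/-- `g_m ∈ K`. -/
def gfun (m : ℕ) : K :=
  if Even m then 1 + algebraMap R K (kap m) / algebraMap R K (afac m) else 0

/-- The solution functional values `α_j ∈ K` on the monomial basis. -/
def alphaK (m : ℕ) : K :=
  gfun m - ∑ j ∈ (Finset.range m).attach, (cheb m).coeff j.1 • alphaK j.1
termination_by m
decreasing_by exact Finset.mem_range.mp j.2

lemma alphaK_spec (m : ℕ) :
    alphaK m = gfun m - ∑ j ∈ Finset.range m, (cheb m).coeff j • alphaK j := by
  rw [alphaK]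
  congr 1
  exact Finset.sum_attach (Finset.range m) (fun j => (cheb m).coeff j • alphaK j)

lemma gfun_zero : gfun 0 = 1 := by
  simp [gfun, kap]

lemma alphaK_zero : alphaK 0 = 1 := by
  rw [alphaK_spec]; simp [gfun_zero]

lemma alphaK_one : alphaK 1 = 0 := by
  rw [alphaK_spec]
  have : ¬ Even 1 := by decide
  simp [gfun, this, cheb]

/-- The `R`-linear functional `L : R[t] → K` with `L(t^j) = α_j`. -/
def Lfun : Polynomial R →ₗ[R] K where
  toFun p := p.sum fun j c => c • alphaK j
  map_add' p q := Polynomial.sum_add_index p q (fun j c => c • alphaK j)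
    (fun i => zero_smul R (alphaK i)) (fun a b₁ b₂ => add_smul b₁ b₂ (alphaK a))
  map_smul' r p := by
    show ((r • p).sum fun j c => c • alphaK j) = r • p.sum fun j c => c • alphaK j
    rw [Polynomial.sum_smul_index p r (fun j c => c • alphaK j)
      (fun i => zero_smul R (alphaK i))]
    rw [Polynomial.sum_def, Polynomial.sum_def, Finset.smul_sum]
    exact Finset.sum_congr rfl fun j _ => mul_smul r _ _

lemma Lfun_apply (p : Polynomial R) : Lfun p = p.sum fun j c => c • alphaK j := rfl

lemma Lfun_eq_sum_range {p : Polynomial R} {N : ℕ} (h : p.natDegree < N) :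
    Lfun p = ∑ j ∈ Finset.range N, p.coeff j • alphaK j := by
  rw [Lfun_apply]
  exact Polynomial.sum_over_range' p (fun n => zero_smul R (alphaK n)) N h

lemma Lfun_C (a : R) : Lfun (Polynomial.C a) = a • alphaK 0 := by
  rw [Lfun_apply]
  exact Polynomial.sum_C_index (zero_smul R (alphaK 0))

lemma Lfun_one : Lfun 1 = 1 := by
  rw [show (1 : Polynomial R) = Polynomial.C 1 from (map_one Polynomial.C).symm, Lfun_C,
    alphaK_zero, one_smul]

lemma Lfun_X : Lfun Polynomial.X = 0 := by
  have h : Polynomial.X.sum (fun j (c : R) => c • alphaK j) = (1 : R) • alphaK 1 :=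
    Polynomial.sum_X_index (zero_smul R (alphaK 1))
  rw [Lfun_apply, h, one_smul, alphaK_one]

lemma Lfun_cheb (m : ℕ) : Lfun (cheb m) = gfun m := by
  obtain ⟨hm, hd⟩ := cheb_monic_natDegree m
  rw [Lfun_eq_sum_range (N := m + 1) (by omega), Finset.sum_range_succ]
  have hc : (cheb m).coeff m = 1 := by
    have := hm.coeff_natDegree
    rwa [hd] at this
  rw [hc, one_smul, alphaK_spec m]
  ring

lemma Lfun_rel (m : ℕ) : Lfun (rel m) = 0 := by
  rcases Nat.even_or_odd m with he | ho
  · rw [rel_even he]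
    have h1 : Polynomial.C (afac m) * (cheb m - 1) = afac m • (cheb m - 1) := by
      rw [Polynomial.smul_eq_C_mul]
    have h2 : (Polynomial.C (kap m) : Polynomial R) = kap m • 1 := by
      rw [Polynomial.smul_eq_C_mul, mul_one]
    rw [map_sub, h1, h2, map_smul, map_smul, map_sub, Lfun_cheb, Lfun_one]
    rw [gfun, if_pos he]
    rw [add_sub_cancel_left]
    rw [Algebra.smul_def, Algebra.smul_def, mul_one]
    rw [mul_div_cancel₀ _ (aM_afac_ne_zero m)]
    exact sub_self _
  · have he : ¬ Even m := by rwa [Nat.not_even_iff_odd]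
    rw [rel_odd he]
    have h1 : Polynomial.C (afac m) * (cheb m - Polynomial.X)
        = afac m • (cheb m - Polynomial.X) := by rw [Polynomial.smul_eq_C_mul]
    have h2 : (2 : Polynomial R) * Polynomial.X * Polynomial.C (tauf m)
        = (2 * tauf m) • Polynomial.X := by
      rw [Polynomial.smul_eq_C_mul, map_mul, map_ofNat]
      ring
    rw [map_sub, h1, h2, map_smul, map_smul, map_sub, Lfun_cheb, Lfun_X]
    rw [gfun, if_neg he]
    simp

lemma SRel_le_ker : SRel ≤ LinearMap.ker Lfun := by
  rw [SRel, Submodule.span_le]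
  rintro p ⟨n, -, rfl⟩
  exact Lfun_rel n

/-- `E_j = ∏_{m ≤ j} a_m`. -/
def Efun (j : ℕ) : R := ∏ m ∈ Finset.range (j + 1), afac m

/-- `b_j ∈ R` with `b_j = E_j · α_j`. -/
def bfun (j : ℕ) : R :=
  (if Even j then Efun j + kap j * ∏ m ∈ Finset.range j, afac m else 0)
    - ∑ i ∈ (Finset.range j).attach,
        (cheb j).coeff i.1 * (∏ m ∈ Finset.Ico (i.1 + 1) (j + 1), afac m) * bfun i.1
termination_by j
decreasing_by exact Finset.mem_range.mp i.2

lemma bfun_def (j : ℕ) : bfun j =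
    (if Even j then Efun j + kap j * ∏ m ∈ Finset.range j, afac m else 0)
    - ∑ i ∈ Finset.range j,
        (cheb j).coeff i * (∏ m ∈ Finset.Ico (i + 1) (j + 1), afac m) * bfun i := by
  rw [bfun]
  congr 1
  exact Finset.sum_attach (Finset.range j)
    (fun i => (cheb j).coeff i * (∏ m ∈ Finset.Ico (i + 1) (j + 1), afac m) * bfun i)

lemma Efun_split {i j : ℕ} (hij : i < j) :
    Efun j = Efun i * ∏ m ∈ Finset.Ico (i + 1) (j + 1), afac m := by
  rw [Efun, Efun, Finset.prod_range_mul_prod_Ico _ (by omega : i + 1 ≤ j + 1)]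

lemma bfun_spec (j : ℕ) : algebraMap R K (bfun j) = algebraMap R K (Efun j) * alphaK j := by
  induction j using Nat.strong_induction_on with
  | _ j ih =>
    rw [bfun_def, alphaK_spec, mul_sub, map_sub, map_sum, Finset.mul_sum]
    congr 1
    · -- head terms
      rcases Nat.even_or_odd j with he | ho
      · rw [if_pos he, gfun, if_pos he]
        have hE : Efun j = (∏ m ∈ Finset.range j, afac m) * afac j :=
          Finset.prod_range_succ _ _
        rw [hE, map_add, map_mul, map_mul, mul_add, mul_one, mul_assoc, ← mul_div_assoc,
          mul_div_cancel_left₀ _ (aM_afac_ne_zero j)]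
        ring
      · have he : ¬ Even j := by rwa [Nat.not_even_iff_odd]
        rw [if_neg he, gfun, if_neg he, mul_zero, map_zero]
    · -- sums match termwise
      refine Finset.sum_congr rfl fun i hi => ?_
      have hij : i < j := Finset.mem_range.mp hi
      rw [map_mul, map_mul, ih i hij, Algebra.smul_def]
      rw [Efun_split hij, map_mul]
      ring

/-- Term-by-term identity used in the main lemma. -/
lemma key_term {i j : ℕ} (hij : i < j) (c : R) :
    algebraMap R K (Efun j) * (c • alphaK i)
      = algebraMap R K (c * (∏ m ∈ Finset.Ico (i + 1) (j + 1), afac m) * bfun i) := by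
  rw [Algebra.smul_def, map_mul, map_mul, bfun_spec, Efun_split hij, map_mul]
  ring

/-! ### Evaluation at a primitive root of unity -/

/-- The evaluation `R →+* ℂ` at a nonzero complex number `z`, `T k ↦ z^k`. -/
def evh (z : ℂ) (hz : z ≠ 0) : R →+* ℂ :=
  ((AddMonoidAlgebra.lift ℤ ℂ ℤ
    { toFun := fun x => z ^ (Multiplicative.toAdd x)
      map_one' := by simp
      map_mul' := fun x y => by
        simp only [toAdd_mul]
        exact zpow_add₀ hz _ _ }) : AddMonoidAlgebra ℤ ℤ →ₐ[ℤ] ℂ).toRingHom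

lemma evh_T (z : ℂ) (hz : z ≠ 0) (k : ℤ) : evh z hz (T k) = z ^ k := by
  have h : (T k : R) = AddMonoidAlgebra.single k (1 : ℤ) := rfl
  rw [evh, AlgHom.toRingHom_eq_coe, RingHom.coe_coe, h, AddMonoidAlgebra.lift_single]
  show (1 : ℤ) • z ^ k = z ^ k
  rw [one_smul]

section PrimRoot

/-- Abbreviation for the chosen primitive `4n+4`-th root of unity. -/
def zeta (n : ℕ) : ℂ := Complex.exp (2 * Real.pi * Complex.I / (4 * n + 4))

lemma zeta_prim (n : ℕ) : IsPrimitiveRoot (zeta n) (4 * n + 4) := by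
  have h := Complex.isPrimitiveRoot_exp (4 * n + 4) (by omega)
  have he : ((4 * n + 4 : ℕ) : ℂ) = (4 * (n : ℂ) + 4) := by push_cast; ring
  rwa [zeta, ← he]

lemma zeta_ne_zero (n : ℕ) : zeta n ≠ 0 := Complex.exp_ne_zero _

/-- `ζ^(2n+2) = -1`. -/
lemma zeta_pow_eq_neg_one (n : ℕ) : zeta n ^ (2 * n + 2) = -1 := by
  have h1 : (zeta n ^ (2 * n + 2)) ^ 2 = 1 := by
    rw [← pow_mul]
    have he : (2 * n + 2) * 2 = 4 * n + 4 := by ring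
    rw [he]
    exact (zeta_prim n).pow_eq_one
  have h2 : zeta n ^ (2 * n + 2) ≠ 1 :=
    (zeta_prim n).pow_ne_one_of_pos_of_lt (by omega) (by omega)
  have h3 : (zeta n ^ (2 * n + 2) - 1) * (zeta n ^ (2 * n + 2) + 1) = 0 := by
    linear_combination h1
  rcases mul_eq_zero.mp h3 with h | h
  · exact absurd (sub_eq_zero.mp h) h2
  · exact eq_neg_of_add_eq_zero_left h

/-- `ζ^(2k+2) ≠ -1` for `k < n`. -/
lemma zeta_pow_ne_neg_one {n k : ℕ} (hk : k < n) : zeta n ^ (2 * k + 2) ≠ -1 := by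
  intro h
  have h1 : zeta n ^ ((2 * k + 2) * 2) = 1 := by
    rw [pow_mul, h]
    norm_num
  rw [(zeta_prim n).pow_eq_one_iff_dvd] at h1
  have := Nat.le_of_dvd (by omega) h1
  omega

/-- Evaluation of `afac`. -/
lemma evh_afac (n m : ℕ) :
    evh (zeta n) (zeta_ne_zero n) (afac m)
      = zeta n ^ ((m : ℤ) + 1) + zeta n ^ (-((m : ℤ) + 1)) := by
  rw [afac, map_add, evh_T, evh_T]

lemma zpow_nat_succ (n m : ℕ) : zeta n ^ ((m : ℤ) + 1) = zeta n ^ (m + 1) := by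
  rw [show ((m : ℤ) + 1) = ((m + 1 : ℕ) : ℤ) by push_cast; ring, zpow_natCast]

lemma evh_afac_self (n : ℕ) : evh (zeta n) (zeta_ne_zero n) (afac n) = 0 := by
  rw [evh_afac, zpow_nat_succ, zpow_neg, zpow_nat_succ]
  set x := zeta n ^ (n + 1) with hx
  have hx0 : x ≠ 0 := pow_ne_zero _ (zeta_ne_zero n)
  have hx2 : x ^ 2 = -1 := by
    rw [hx, ← pow_mul]
    have : (n + 1) * 2 = 2 * n + 2 := by ring
    rw [this]
    exact zeta_pow_eq_neg_one n
  field_simp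
  linear_combination hx2

lemma evh_afac_lt {n k : ℕ} (hk : k < n) :
    evh (zeta n) (zeta_ne_zero n) (afac k) ≠ 0 := by
  rw [evh_afac, zpow_nat_succ, zpow_neg, zpow_nat_succ]
  set x := zeta n ^ (k + 1) with hx
  have hx0 : x ≠ 0 := pow_ne_zero _ (zeta_ne_zero n)
  intro h
  have hx2 : x ^ 2 = -1 := by
    field_simp at h
    linear_combination h
  apply zeta_pow_ne_neg_one hk
  rw [show 2 * k + 2 = (k + 1) * 2 by ring, pow_mul]
  exact hx2

/-- Evaluation of `kap n` is nonzero. -/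
lemma evh_kap_self {n : ℕ} (hn : Even n) (hn2 : 2 ≤ n) :
    evh (zeta n) (zeta_ne_zero n) (kap n) ≠ 0 := by
  set z := zeta n with hzdef
  have hz0 : z ≠ 0 := zeta_ne_zero n
  have hprim := zeta_prim n
  rw [kap]
  rw [map_mul, map_mul, map_ofNat, map_add, evh_T, evh_T, map_sum]
  refine mul_ne_zero (mul_ne_zero two_ne_zero ?_) ?_
  · -- z + z⁻¹ ≠ 0
    have := evh_afac_lt (show 0 < n by omega)
    rw [evh_afac] at this
    norm_num at this ⊢
    exact this
  · -- geometric sum nonzero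
    have hterm : ∀ k ∈ Finset.range (n / 2),
        evh z hz0 (T ((n : ℤ) + 2 - 4 * ((k : ℤ) + 1)))
          = z ^ ((n : ℤ) - 2) * (z ^ (-4 : ℤ)) ^ k := by
      intro k _
      rw [evh_T]
      rw [← zpow_natCast (z ^ (-4 : ℤ)) k, ← zpow_mul, ← zpow_add₀ hz0]
      congr 1
      push_cast
      ring
    rw [Finset.sum_congr rfl hterm, ← Finset.mul_sum]
    have h4 : z ^ (-4 : ℤ) ≠ 1 := by
      intro h
      rw [hprim.zpow_eq_one_iff_dvd] at h
      have h' : ((4 * n + 4 : ℕ) : ℤ) ∣ (4 : ℤ) := (dvd_neg).mp h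
      have := Int.le_of_dvd (by norm_num) h'
      push_cast at this
      omega
    have hnum : (z ^ (-4 : ℤ)) ^ (n / 2) ≠ 1 := by
      obtain ⟨l, hl⟩ := hn
      have hl2 : n / 2 = l := by omega
      rw [← zpow_natCast (z ^ (-4 : ℤ)) (n / 2), ← zpow_mul, hl2]
      intro h
      rw [show (-4 : ℤ) * (l : ℤ) = -(4 * l) by ring, hprim.zpow_eq_one_iff_dvd,
        dvd_neg] at h
      have := Int.le_of_dvd (by push_cast; omega) h
      push_cast at this
      omega
    rw [geom_sum_eq h4]
    exact mul_ne_zero (zpow_ne_zero _ hz0)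
      (div_ne_zero (sub_ne_zero.mpr hnum) (sub_ne_zero.mpr h4))

end PrimRoot

lemma evh_bfun_self {n : ℕ} (hn : Even n) (hn2 : 2 ≤ n) :
    evh (zeta n) (zeta_ne_zero n) (bfun n) ≠ 0 := by
  set ev := evh (zeta n) (zeta_ne_zero n) with hev
  rw [bfun_def, map_sub, if_pos hn, map_add]
  have hEn : ev (Efun n) = 0 := by
    rw [Efun, map_prod]
    exact Finset.prod_eq_zero (Finset.self_mem_range_succ n) (evh_afac_self n)
  have hsum : ev (∑ i ∈ Finset.range n,
      (cheb n).coeff i * (∏ m ∈ Finset.Ico (i + 1) (n + 1), afac m) * bfun i) = 0 := by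
    rw [map_sum]
    refine Finset.sum_eq_zero fun i hi => ?_
    have hi' : i < n := Finset.mem_range.mp hi
    rw [map_mul, map_mul, map_prod]
    have hz0 : ∏ m ∈ Finset.Ico (i + 1) (n + 1), ev (afac m) = 0 :=
      Finset.prod_eq_zero (i := n) (Finset.mem_Ico.mpr ⟨by omega, by omega⟩)
        (evh_afac_self n)
    rw [hz0, mul_zero, zero_mul]
  rw [hEn, hsum, zero_add, sub_zero, map_mul, map_prod]
  refine mul_ne_zero (evh_kap_self hn hn2) (Finset.prod_ne_zero_iff.mpr fun m hm => ?_)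
  exact evh_afac_lt (Finset.mem_range.mp hm)

lemma aM_ne_zero {x : R} (hx : x ≠ 0) : algebraMap R K x ≠ 0 := by
  rw [Ne, map_eq_zero_iff _ (IsFractionRing.injective R K)]
  exact hx

/-- The key non-membership lemma: no `λ•(t^n − h)` with `λ ≠ 0`, `deg h < n`,
`n ≥ 2` even, lies in `SRel`. -/
lemma keyC {n : ℕ} (hn : Even n) (hn2 : 2 ≤ n) {lam : R} (hlam : lam ≠ 0)
    {h : Polynomial R} (hd : h.natDegree < n)
    (hmem : lam • ((Polynomial.X : Polynomial R) ^ n - h) ∈ SRel) : False := by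
  have hL : Lfun (lam • (Polynomial.X ^ n - h)) = 0 := SRel_le_ker hmem
  rw [map_smul, map_sub] at hL
  have hXn : Lfun ((Polynomial.X : Polynomial R) ^ n) = alphaK n := by
    rw [Lfun_eq_sum_range (N := n + 1) (by rw [Polynomial.natDegree_X_pow]; omega)]
    simp [Polynomial.coeff_X_pow, ite_smul]
  rw [hXn, Algebra.smul_def] at hL
  have h0 : alphaK n = Lfun h := by
    rcases mul_eq_zero.mp hL with hc | hc
    · exact absurd hc (aM_ne_zero hlam)
    · exact sub_eq_zero.mp hc
  rw [Lfun_eq_sum_range (N := n) hd] at h0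
  have hR : bfun n = ∑ j ∈ Finset.range n,
      h.coeff j * (∏ m ∈ Finset.Ico (j + 1) (n + 1), afac m) * bfun j := by
    apply IsFractionRing.injective R K
    rw [map_sum, bfun_spec, h0, Finset.mul_sum]
    exact Finset.sum_congr rfl fun j hj => key_term (Finset.mem_range.mp hj) _
  have hev := congrArg (evh (zeta n) (zeta_ne_zero n)) hR
  rw [map_sum] at hev
  have hz : ∀ j ∈ Finset.range n, evh (zeta n) (zeta_ne_zero n)
      (h.coeff j * (∏ m ∈ Finset.Ico (j + 1) (n + 1), afac m) * bfun j) = 0 := by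
    intro j hj
    have hj' : j < n := Finset.mem_range.mp hj
    rw [map_mul, map_mul, map_prod]
    have hz0 : ∏ m ∈ Finset.Ico (j + 1) (n + 1),
        evh (zeta n) (zeta_ne_zero n) (afac m) = 0 :=
      Finset.prod_eq_zero (i := n) (Finset.mem_Ico.mpr ⟨by omega, by omega⟩)
        (evh_afac_self n)
    rw [hz0, mul_zero, zero_mul]
  rw [Finset.sum_congr rfl hz, Finset.sum_const_zero] at hev
  exact evh_bfun_self hn hn2 hev

end MarcheAux

set_option maxHeartbeats 1000000 in
open DirectSum in
/-- Marché's conjectured decomposition fails for `M = R × R × Q`, the KBSM of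
`ℝP³ # ℝP³`: there is no `d ≥ 0` and no family of finitely generated `R`-modules
`N_k` (`k ≥ 1`, here indexed by `k : ℕ` with `N k` playing the role of `N_{k+1}`),
with every element of `N_k` annihilated by some power of `A^k − A^{−k}`, such that
`M ≅ R^d ⊕ ⊕_{k≥1} N_k`. -/
theorem no_marche_decomposition :
    ¬ ∃ (d : ℕ) (N : ℕ → Type) (_ : ∀ k, AddCommGroup (N k)) (_ : ∀ k, Module R (N k)),
      (∀ k, Module.Finite R (N k)) ∧
      (∀ (k : ℕ) (x : N k), ∃ m : ℕ,
        ((T ((k : ℤ) + 1) - T (-((k : ℤ) + 1)) : R) ^ m) • x = 0) ∧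
      Nonempty ((R × R × Qmod) ≃ₗ[R] (Fin d → R) × (⨁ k : ℕ, N k)) := by
  rintro ⟨d, N, iAG, iM, hfin, htor, ⟨e⟩⟩
  classical
  have hann : ∀ v : ⨁ k : ℕ, N k, ∃ a : R, a ≠ 0 ∧ a • v = 0 := by
    intro v
    refine DirectSum.induction_on v ⟨1, one_ne_zero, smul_zero 1⟩ (fun k x => ?_) ?_
    · obtain ⟨m, hm⟩ := htor k x
      refine ⟨(T ((k : ℤ) + 1) - T (-((k : ℤ) + 1))) ^ m,
        pow_ne_zero _ (MarcheAux.T_sub_T_ne_zero (by omega)), ?_⟩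
      rw [← DirectSum.of_smul, hm, map_zero]
    · rintro x y ⟨a, ha, hax⟩ ⟨b, hb, hby⟩
      refine ⟨a * b, mul_ne_zero ha hb, ?_⟩
      have hx0 : (a * b) • x = 0 := by rw [mul_comm, mul_smul, hax, smul_zero]
      have hy0 : (a * b) • y = 0 := by rw [mul_smul, hby, smul_zero]
      rw [smul_add, hx0, hy0, add_zero]
  set Tq := Submodule.torsion R Qmod with hTq
  let F : (Fin d → R) →ₗ[R] Qmod ⧸ Tq :=
    Tq.mkQ ∘ₗ (LinearMap.snd R R Qmod) ∘ₗ (LinearMap.snd R R (R × Qmod)) ∘ₗ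
      (e.symm : ((Fin d → R) × ⨁ k : ℕ, N k) →ₗ[R] R × R × Qmod) ∘ₗ
      LinearMap.inl R (Fin d → R) (⨁ k : ℕ, N k)
  have hF : Function.Surjective F := by
    intro yq
    obtain ⟨q, rfl⟩ := Tq.mkQ_surjective yq
    refine ⟨(e ((0 : R), (0 : R), q)).1, ?_⟩
    set uv := e ((0 : R), (0 : R), q) with huv
    have h1 : e.symm (uv.1, (0 : ⨁ k : ℕ, N k))
        = ((0 : R), (0 : R), q) - e.symm (0, uv.2) := by
      have h1a : (uv.1, (0 : ⨁ k : ℕ, N k)) = uv - ((0 : Fin d → R), uv.2) := by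
        refine Prod.ext ?_ ?_
        · rw [Prod.fst_sub, sub_zero]
        · rw [Prod.snd_sub, sub_self]
      rw [h1a, map_sub, huv, e.symm_apply_apply]
    obtain ⟨a, ha0, hav⟩ := hann uv.2
    have h2 : a • e.symm ((0 : Fin d → R), uv.2) = 0 := by
      rw [← map_smul]
      have h2a : a • ((0 : Fin d → R), uv.2) = 0 := by
        rw [Prod.smul_mk, hav, smul_zero]
        rfl
      rw [h2a, map_zero]
    have h3 : (e.symm ((0 : Fin d → R), uv.2)).2.2 ∈ Tq := by
      rw [hTq, Submodule.mem_torsion_iff]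
      refine ⟨⟨a, mem_nonZeroDivisors_of_ne_zero ha0⟩, ?_⟩
      exact congrArg (fun w : R × R × Qmod => w.2.2) h2
    have hFu : F uv.1 = Tq.mkQ ((e.symm (uv.1, (0 : ⨁ k : ℕ, N k))).2.2) := by
      simp only [F, LinearMap.coe_comp, Function.comp_apply, LinearMap.inl_apply,
        LinearMap.snd_apply, LinearEquiv.coe_coe]
    rw [hFu, h1]
    have h1b : ((((0 : R), (0 : R), q) - e.symm (0, uv.2)).2.2 : Qmod)
        = q - (e.symm (0, uv.2)).2.2 := by
      rw [Prod.snd_sub, Prod.snd_sub]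
    rw [h1b, map_sub]
    have h3' : Tq.mkQ ((e.symm ((0 : Fin d → R), uv.2)).2.2) = 0 := by
      rw [Submodule.mkQ_apply, Submodule.Quotient.mk_eq_zero]
      exact h3
    rw [h3', sub_zero, Submodule.mkQ_apply]
  haveI : Module.Finite R (Qmod ⧸ Tq) := Module.Finite.of_surjective F hF
  obtain ⟨nn, s, hs⟩ := Module.Finite.exists_fin (R := R) (M := Qmod ⧸ Tq)
  have hπ : ∀ y : Qmod ⧸ Tq, ∃ pp : Polynomial R, Tq.mkQ (SRel.mkQ pp) = y := by
    intro y
    obtain ⟨z, rfl⟩ := Tq.mkQ_surjective y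
    obtain ⟨pp, rfl⟩ := SRel.mkQ_surjective z
    exact ⟨pp, rfl⟩
  choose p hp using fun i => hπ (s i)
  set D := Finset.univ.sup (fun i => (p i).natDegree) with hD
  set n := 2 * D + 2 with hn
  have hmem : Tq.mkQ (SRel.mkQ (Polynomial.X ^ n)) ∈ Submodule.span R (Set.range s) := by
    rw [hs]; exact Submodule.mem_top
  rw [Submodule.mem_span_range_iff_exists_fun] at hmem
  obtain ⟨c, hc⟩ := hmem
  set h : Polynomial R := ∑ i, c i • p i with hh
  have hπh : Tq.mkQ (SRel.mkQ h) = Tq.mkQ (SRel.mkQ (Polynomial.X ^ n)) := by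
    rw [hh, map_sum, map_sum, ← hc]
    exact Finset.sum_congr rfl fun i _ => by rw [map_smul, map_smul, hp i]
  have hdeg : h.natDegree < n := by
    have hb : h.natDegree ≤ D := by
      rw [hh, hD]
      exact Polynomial.natDegree_sum_le_of_forall_le _ _ fun i _ =>
        le_trans (Polynomial.natDegree_smul_le _ _)
          (Finset.le_sup (f := fun i => (p i).natDegree) (Finset.mem_univ i))
    omega
  have h4a : Tq.mkQ (SRel.mkQ (Polynomial.X ^ n - h)) = 0 := by
    rw [map_sub, map_sub, hπh, sub_self]
  have h5 : SRel.mkQ (Polynomial.X ^ n - h) ∈ Tq := by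
    rwa [Submodule.mkQ_apply, Submodule.Quotient.mk_eq_zero] at h4a
  rw [hTq, Submodule.mem_torsion_iff] at h5
  obtain ⟨a, ha⟩ := h5
  have h6 : (a : R) • (Polynomial.X ^ n - h) ∈ SRel := by
    have h6a : SRel.mkQ ((a : R) • (Polynomial.X ^ n - h)) = 0 := by
      rw [map_smul]
      rw [show (a : R) • SRel.mkQ (Polynomial.X ^ n - h)
        = a • SRel.mkQ (Polynomial.X ^ n - h) from rfl, ha]
    rwa [Submodule.mkQ_apply, Submodule.Quotient.mk_eq_zero] at h6a
  exact MarcheAux.keyC (n := n) ⟨D + 1, by omega⟩ (by omega)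
    (nonZeroDivisors.coe_ne_zero a) hdeg h6


end
end

section
/- Let R = ℤ[A,A⁻¹] be the ring of Laurent polynomials over ℤ and let Q = R[t]/S where S is the R-submodule of R[t] generated by the elements r_n for n ≥ 2 (defined in the context). Then Q contains nonzero torsion: there exist a nonzero element x ∈ Q and a nonzero element r ∈ R such that r·x = 0. -/
/-!
The quotient module Q = R[t]/S (with R = ℤ[A,A⁻¹] and S generated by the
skein relations r_n, n ≥ 2, of the KBSM of ℝP³ # ℝP³) contains nonzero torsion.
-/

open LaurentPolynomial Polynomial

noncomputable section

/-! ### Auxiliary machinery -/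

/-- Evaluation of a Laurent polynomial at a unit of a field. -/
def ev {K : Type*} [Field K] (u : Kˣ) : R →+* K :=
  (AddMonoidAlgebra.lift ℤ K ℤ ((Units.coeHom K).comp (zpowersHom Kˣ u))).toRingHom

lemma ev_T {K : Type*} [Field K] (u : Kˣ) (z : ℤ) : ev u (T z) = (u : K) ^ z := by
  rw [ev, T]
  show ((AddMonoidAlgebra.lift ℤ K ℤ) ((Units.coeHom K).comp ((zpowersHom Kˣ) u))).toRingHom (AddMonoidAlgebra.single z 1) = _
  rw [AlgHom.toRingHom_eq_coe, RingHom.coe_coe, AddMonoidAlgebra.lift_single]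
  simp [Units.val_zpow_eq_zpow_val]

/-- The unit `i : ℂˣ`. -/
def uI : ℂˣ := ⟨Complex.I, -Complex.I, by simp [Complex.I_mul_I], by simp [Complex.I_mul_I]⟩

/-- `A ↦ i`. -/
def ψ : R →+* ℂ := ev uI

lemma ψ_T (z : ℤ) : ψ (T z) = Complex.I ^ z := ev_T uI z

lemma I_zpow_two_mul (z : ℤ) : (Complex.I) ^ (2 * z) = (-1 : ℂ) ^ z := by
  rw [zpow_mul, show Complex.I ^ (2:ℤ) = -1 by rw [zpow_two, Complex.I_mul_I]]

lemma neg_one_zpow_add_two_mul (b c : ℤ) : (-1 : ℂ) ^ (b + 2 * c) = (-1 : ℂ) ^ b := by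
  rw [zpow_add₀ (by norm_num : (-1:ℂ) ≠ 0), zpow_mul]
  norm_num

lemma neg_one_zpow_inv (z : ℤ) : ((-1 : ℂ) ^ z)⁻¹ = (-1 : ℂ) ^ z := by
  rw [← zpow_neg, show -z = z + 2 * (-z) by ring, neg_one_zpow_add_two_mul]

lemma I_zpow_odd (m : ℤ) : Complex.I ^ (2 * m + 1) + Complex.I ^ (-(2 * m + 1)) = 0 := by
  rw [zpow_add₀ Complex.I_ne_zero, zpow_neg, zpow_add₀ Complex.I_ne_zero,
    I_zpow_two_mul, zpow_one, mul_inv, neg_one_zpow_inv, Complex.inv_I]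
  ring

lemma cheb_eval : ∀ n : ℕ, Polynomial.eval₂ ψ 2 (cheb n) = (n : ℂ) + 1
  | 0 => by rw [show cheb 0 = 1 from rfl, eval₂_one]; norm_num
  | 1 => by rw [show cheb 1 = X from rfl, eval₂_X]; norm_num
  | n + 2 => by
    rw [cheb, eval₂_sub, eval₂_mul, eval₂_X, cheb_eval (n + 1), cheb_eval n]
    push_cast
    ring

/-- The evaluation `R[t] → ℂ`, `A ↦ i`, `t ↦ 2`, kills every relation `rel n`. -/
lemma eval_rel (n : ℕ) : Polynomial.eval₂ ψ 2 (rel n) = 0 := by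
  rcases Nat.even_or_odd n with he | ho
  · obtain ⟨m, rfl⟩ := he
    rw [rel, if_pos (by exact ⟨m, by ring⟩)]
    rw [eval₂_sub, eval₂_mul, Polynomial.eval₂_C, Polynomial.eval₂_C]
    have h1 : ((m + m : ℕ) : ℤ) + 1 = 2 * (m : ℤ) + 1 := by push_cast; ring
    have h2 : ψ (T ((m + m : ℕ) + 1) + T (-((m + m : ℕ) + 1))) = 0 := by
      rw [map_add, ψ_T, ψ_T, h1, I_zpow_odd]
    have h3 : ψ (T 1 + T (-1)) = 0 := by
      have := I_zpow_odd 0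
      rw [map_add, ψ_T, ψ_T]
      simpa using this
    rw [h2, map_mul, map_mul, h3]
    ring
  · obtain ⟨m, rfl⟩ := ho
    rw [rel, if_neg (by simp [parity_simps])]
    rw [eval₂_sub, eval₂_mul, Polynomial.eval₂_C, eval₂_mul, eval₂_mul, eval₂_X, Polynomial.eval₂_C,
      eval₂_sub, eval₂_X, cheb_eval]
    have h1 : ψ (T ((2 * m + 1 : ℕ) + 1) + T (-((2 * m + 1 : ℕ) + 1))) =
        2 * (-1 : ℂ) ^ ((m : ℤ) + 1) := by
      rw [map_add, ψ_T, ψ_T]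
      have e : ((2 * m + 1 : ℕ) : ℤ) + 1 = 2 * ((m : ℤ) + 1) := by push_cast; ring
      rw [e, I_zpow_two_mul, zpow_neg, I_zpow_two_mul, neg_one_zpow_inv]
      ring
    have h2 : ψ (∑ k ∈ Finset.range ((2 * m + 1 - 1) / 2),
        T (((2 * m + 1 : ℕ) : ℤ) + 1 - 4 * ((k : ℤ) + 1))) =
        (m : ℂ) * (-1 : ℂ) ^ ((m : ℤ) + 1) := by
      rw [map_sum]
      have hm : (2 * m + 1 - 1) / 2 = m := by omega
      rw [hm]
      have hterm : ∀ k ∈ Finset.range m,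
          ψ (T (((2 * m + 1 : ℕ) : ℤ) + 1 - 4 * ((k : ℤ) + 1))) =
          (-1 : ℂ) ^ ((m : ℤ) + 1) := by
        intro k _
        rw [ψ_T]
        have e : ((2 * m + 1 : ℕ) : ℤ) + 1 - 4 * ((k : ℤ) + 1) =
            2 * (((m : ℤ) + 1) + 2 * (-((k : ℤ) + 1))) := by push_cast; ring
        rw [e, I_zpow_two_mul, neg_one_zpow_add_two_mul]
      rw [Finset.sum_congr rfl hterm, Finset.sum_const, Finset.card_range, nsmul_eq_mul]
    have h4 : Polynomial.eval₂ ψ (2:ℂ) (2 : Polynomial R) = 2 := by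
      norm_num
    rw [h1, h2, h4]
    push_cast
    ring

/-- Everything in `SRel` evaluates to `0`. -/
lemma eval_SRel {p : Polynomial R} (hp : p ∈ SRel) : Polynomial.eval₂ ψ 2 p = 0 := by
  refine Submodule.span_induction ?_ ?_ ?_ ?_ hp
  · rintro q ⟨n, -, rfl⟩; exact eval_rel n
  · simp
  · intro a b _ _ ha hb; rw [eval₂_add, ha, hb, add_zero]
  · intro c q _ hq
    rw [Polynomial.smul_eq_C_mul, eval₂_mul, hq, mul_zero]

/-- The torsion witness: `(A² − 1 + A⁻²)·t² − 2(A² + A⁻²)`. -/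
def x0 : Polynomial R :=
  Polynomial.C (T 2 - 1 + T (-2)) * X ^ 2 - Polynomial.C (2 * (T 2 + T (-2)))

lemma smul_x0 : (T 1 + T (-1) : R) • x0 = rel 2 := by
  have e1 : (T 1 + T (-1) : R) * (T 2 - 1 + T (-2)) = T 3 + T (-3) := by
    simp only [mul_add, add_mul, mul_sub, sub_mul, mul_one, one_mul, ← T_add]
    norm_num; ring
  have e2 : (T 1 + T (-1) : R) * (2 * (T 2 + T (-2))) =
      2 * (T 1 + T (-1)) + (T 3 + T (-3)) * 2 := by
    simp only [mul_add, add_mul, mul_sub, sub_mul, mul_one, one_mul, ← T_add]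
    ring_nf
    simp only [← T_add]
    norm_num; ring
  have hc : cheb 2 = X * X - 1 := by rw [cheb, cheb, cheb]
  rw [Polynomial.smul_eq_C_mul, x0, rel, if_pos (by norm_num), hc]
  rw [mul_sub, ← mul_assoc, ← Polynomial.C_mul, ← Polynomial.C_mul, e1, e2]
  norm_num [Finset.sum_range_one]
  simp only [map_ofNat]
  ring

/-- `Q = R[t]/S` contains nonzero torsion: there are `x ∈ Q`, `x ≠ 0`, and
`r ∈ R`, `r ≠ 0`, with `r • x = 0`. -/
theorem exists_torsion :
    ∃ (x : Qmod) (r : R), x ≠ 0 ∧ r ≠ 0 ∧ r • x = 0 := by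
  refine ⟨Submodule.Quotient.mk x0, T 1 + T (-1), ?_, ?_, ?_⟩
  · intro h
    rw [Submodule.Quotient.mk_eq_zero] at h
    have h0 := eval_SRel h
    rw [x0, eval₂_sub, eval₂_mul, Polynomial.eval₂_C, eval₂_pow, eval₂_X, Polynomial.eval₂_C,
      map_mul, map_add, map_sub, map_add, map_one, ψ_T, ψ_T, map_ofNat] at h0
    have hI : Complex.I ^ (2:ℤ) = -1 := by rw [zpow_two, Complex.I_mul_I]
    have hI2 : Complex.I ^ (-2:ℤ) = -1 := by rw [zpow_neg, hI]; norm_num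
    rw [hI, hI2] at h0
    norm_num at h0
  · intro h
    have h2 := congrArg (ev (Units.mk0 (2 : ℚ) two_ne_zero)) h
    rw [map_add, ev_T, ev_T, map_zero] at h2
    norm_num at h2
  · rw [← Submodule.Quotient.mk_smul, smul_x0]
    rw [Submodule.Quotient.mk_eq_zero]
    exact Submodule.subset_span ⟨2, le_refl 2, rfl⟩

end
end
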